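/- Let F be a field and R a subring of F. Let S_{F/R} be the set of valuation subrings of F containing R, equipped with the Zariski topology, namely the topology generated by the sets {A ∈ S_{F/R} : x ∈ A} for x ∈ F. Then S_{F/R} is quasicompact: every open cover of S_{F/R} has a finite subcover. -/
import Mathlib


/-- The Riemann-Zariski space `S_{F/R}` of valuation subrings of a field `F` containing a
subring `R`, endowed with the Zariski topology (generated by the sets
`{A : x ∈ A}` for `x ∈ F`), is quasicompact. -/
theorem riemannZariski_zariski_quasicompact
    {F : Type*} [Field F] (R : Subring F) :
    @CompactSpace {A : ValuationSubring F // R ≤ A.toSubring}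
      (TopologicalSpace.generateFrom
        {U | ∃ x : F, U = {A : {A : ValuationSubring F // R ≤ A.toSubring} |
          x ∈ (A : ValuationSubring F)}}) := by
  set S := {A : ValuationSubring F // R ≤ A.toSubring}
  set G : Set (Set S) :=
    {U | ∃ x : F, U = {A : S | x ∈ (A : ValuationSubring F)}} with hG
  letI t : TopologicalSpace S := TopologicalSpace.generateFrom G
  refine ⟨?_⟩
  rw [isCompact_iff_ultrafilter_le_nhds]
  intro 𝒰 _
  -- the limit valuation subring
  have hmem : ∀ x y : F, {A : S | x ∈ (A : ValuationSubring F)} ∈ 𝒰 →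
      {A : S | y ∈ (A : ValuationSubring F)} ∈ 𝒰 →
      ∀ z : F, (∀ B : ValuationSubring F, x ∈ B → y ∈ B → z ∈ B) →
      {A : S | z ∈ (A : ValuationSubring F)} ∈ 𝒰 := by
    intro x y hx hy z hz
    filter_upwards [hx, hy] with A hxA hyA
    exact hz A.1 hxA hyA
  set A₀ : ValuationSubring F :=
    { carrier := {x : F | {A : S | x ∈ (A : ValuationSubring F)} ∈ 𝒰}
      one_mem' := by
        have : {A : S | (1:F) ∈ (A : ValuationSubring F)} = Set.univ := by
          ext A; simp [one_mem]
        simp only [Set.mem_setOf_eq, this]; exact Filter.univ_mem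
      zero_mem' := by
        have : {A : S | (0:F) ∈ (A : ValuationSubring F)} = Set.univ := by
          ext A; simp [zero_mem]
        simp only [Set.mem_setOf_eq, this]; exact Filter.univ_mem
      mul_mem' := fun {x y} hx hy => hmem x y hx hy _ (fun B h1 h2 => mul_mem h1 h2)
      add_mem' := fun {x y} hx hy => hmem x y hx hy _ (fun B h1 h2 => add_mem h1 h2)
      neg_mem' := fun {x} hx => hmem x x hx hx _ (fun B h1 _ => neg_mem h1)
      mem_or_inv_mem' := by
        intro x
        have : {A : S | x ∈ (A : ValuationSubring F)} ∪
            {A : S | x⁻¹ ∈ (A : ValuationSubring F)} = Set.univ := by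
          ext A
          simpa using A.1.mem_or_inv_mem x
        exact Ultrafilter.union_mem_iff.mp (this ▸ Filter.univ_mem) } with hA₀
  have hR : R ≤ A₀.toSubring := by
    intro r hr
    have : {A : S | r ∈ (A : ValuationSubring F)} = Set.univ := by
      ext A; simpa using A.2 hr
    show {A : S | r ∈ (A : ValuationSubring F)} ∈ 𝒰
    rw [this]; exact Filter.univ_mem
  refine ⟨⟨A₀, hR⟩, trivial, ?_⟩
  rw [TopologicalSpace.nhds_generateFrom]
  refine le_iInf fun s => le_iInf fun hs => ?_
  obtain ⟨hA₀s, x, rfl⟩ := hs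
  exact Filter.le_principal_iff.mpr hA₀s
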